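/- A functor u : A ⥤ B between small categories is a precofibration if and only if for every object b of B the canonical functor A_b ⥤ A/b, sending an object a of the fiber A_b to the object (a, 1_b) of the comma category A/b, has a left adjoint. -/

import Mathlib

open CategoryTheory Limits

namespace Paper

/-- The fiber of `u : A ⥤ B` over `b`: objects are the `a` with `u a = b`, morphisms
are the `f` with `u f = 1_b` (expressed via `eqToHom`). -/
def Fiber {A B : Cat.{0,0}} (u : A ⥤ B) (b : B) : Type := {a : A // u.obj a = b}

instance {A B : Cat.{0,0}} (u : A ⥤ B) (b : B) : Category (Fiber u b) where
  Hom a a' := {f : a.1 ⟶ a'.1 // u.map f = eqToHom (a.2.trans a'.2.symm)}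
  id a := ⟨𝟙 a.1, by simp⟩
  comp f g := ⟨f.1 ≫ g.1, by simp [f.2, g.2]⟩
  id_comp f := Subtype.ext (Category.id_comp f.1)
  comp_id f := Subtype.ext (Category.comp_id f.1)
  assoc f g h := Subtype.ext (Category.assoc f.1 g.1 h.1)

/-- The canonical functor `A_b ⥤ A/b`, sending `a` to `(a, 1_b)`. -/
def fiberToComma {A B : Cat.{0,0}} (u : A ⥤ B) (b : B) :
    Fiber u b ⥤ CostructuredArrow u b where
  obj a := CostructuredArrow.mk (eqToHom a.2)
  map {a a'} f := CostructuredArrow.homMk f.1 (by simp [f.2])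

/-- An arrow `c : a ⟶ a'` is cocartesian with respect to `u` if every `f : a ⟶ a''`
with `u f = u c` factors uniquely through `c` via a morphism over an identity. -/
def IsCocartesian {A B : Cat.{0,0}} (u : A ⥤ B) {a a' : A} (c : a ⟶ a') : Prop :=
  ∀ (a'' : A) (f : a ⟶ a'') (h : u.obj a'' = u.obj a'),
    u.map f ≫ eqToHom h = u.map c →
    ∃! g : a' ⟶ a'', u.map g = eqToHom h.symm ∧ f = c ≫ g

/-- `u` is a precofibration if every arrow of `B` admits a cocartesian lift with any
prescribed source. -/
def IsPrecofibration {A B : Cat.{0,0}} (u : A ⥤ B) : Prop :=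
  ∀ ⦃b b' : B⦄ (p : b ⟶ b') (a : A) (ha : u.obj a = b),
    ∃ (a' : A) (c : a ⟶ a') (ha' : u.obj a' = b'),
      u.map c = eqToHom ha ≫ p ≫ eqToHom ha'.symm ∧ IsCocartesian u c

/-- Helper: build an object of the fiber. -/
def mkFiber {A B : Cat.{0,0}} (u : A ⥤ B) {b : B} (a : A) (h : u.obj a = b) : Fiber u b :=
  ⟨a, h⟩

/-- Helper: build a morphism of the fiber. -/
def mkFiberHom {A B : Cat.{0,0}} {u : A ⥤ B} {b : B} {x y : Fiber u b} (f : x.1 ⟶ y.1)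
    (hf : u.map f = eqToHom (x.2.trans y.2.symm)) : x ⟶ y :=
  ⟨f, hf⟩

lemma fiberHom_val {A B : Cat.{0,0}} {u : A ⥤ B} {b : B} {x y : Fiber u b} (f : x ⟶ y) :
    u.map f.1 = eqToHom (x.2.trans y.2.symm) := f.2

lemma fiberToComma_map_left {A B : Cat.{0,0}} (u : A ⥤ B) (b : B) {x y : Fiber u b}
    (f : x ⟶ y) : ((fiberToComma u b).map f).left = f.1 := rfl

/-- A functor is a precofibration if and only if for every object `b` of `B` the
canonical functor `A_b ⥤ A/b` has a left adjoint. -/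
theorem isPrecofibration_iff {A B : Cat.{0,0}} (u : A ⥤ B) :
    IsPrecofibration u ↔ ∀ b : B, (fiberToComma u b).IsRightAdjoint := by
  constructor
  · intro hu b
    rw [isRightAdjoint_iff_hasInitial_structuredArrow]
    intro X
    obtain ⟨a', c, ha', hc, hcoc⟩ := hu X.hom X.left rfl
    simp only [eqToHom_refl, Category.id_comp] at hc
    have ha2 : u.obj a' = b := ha'
    have hw : u.map c ≫ eqToHom ha2 = X.hom := by rw [hc]; simp [eqToHom_trans]
    -- the candidate initial object
    set Y₀ : StructuredArrow X (fiberToComma u b) :=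
      StructuredArrow.mk (Y := mkFiber u a' ha2)
        (CostructuredArrow.homMk c (by simpa [fiberToComma, mkFiber] using hw)) with hY₀
    have key : ∀ Y : StructuredArrow X (fiberToComma u b),
        ∃! g : a' ⟶ Y.right.1, u.map g = eqToHom (ha2.trans Y.right.2.symm) ∧
          Y.hom.left = c ≫ g := by
      intro Y
      have hwY : u.map Y.hom.left ≫ eqToHom Y.right.2 = X.hom := by
        simpa [fiberToComma] using CostructuredArrow.w Y.hom
      have h : u.obj Y.right.1 = u.obj a' := Y.right.2.trans ha2.symm
      obtain ⟨g, ⟨hg1, hg2⟩, hgu⟩ := hcoc Y.right.1 Y.hom.left h (by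
        rw [hc, ← hwY, Category.assoc]
        exact congrArg _ (eqToHom_trans _ _).symm)
      exact ⟨g, ⟨hg1, hg2⟩, fun g' hg' => hgu g' hg'⟩
    let desc : ∀ Y : StructuredArrow X (fiberToComma u b), Y₀ ⟶ Y := fun Y =>
      StructuredArrow.homMk
        (mkFiberHom (x := mkFiber u a' ha2) (key Y).choose (key Y).choose_spec.1.1)
        (by
          apply CostructuredArrow.hom_ext
          simp only [Comma.comp_left, fiberToComma_map_left]
          exact ((key Y).choose_spec.1.2).symm)
    refine IsInitial.hasInitial (IsInitial.ofUniqueHom desc ?_)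
    intro Y m
    apply StructuredArrow.hom_ext
    apply Subtype.ext
    refine ((key Y).choose_spec.2 m.right.1 ⟨m.right.2, ?_⟩).trans rfl
    have := congrArg CommaMorphism.left (StructuredArrow.w m)
    exact this.symm
  · intro hadj b b' p a ha
    have hini := (isRightAdjoint_iff_hasInitial_structuredArrow.mp (hadj b'))
      (CostructuredArrow.mk (Y := a) (eqToHom ha ≫ p))
    set X : CostructuredArrow u b' := CostructuredArrow.mk (Y := a) (eqToHom ha ≫ p) with hX
    let I := ⊥_ (StructuredArrow X (fiberToComma u b'))
    have hwI : u.map I.hom.left ≫ eqToHom I.right.2 = eqToHom ha ≫ p := by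
      have h0 := CostructuredArrow.w I.hom
      simp [fiberToComma] at h0
      exact h0
    refine ⟨I.right.1, I.hom.left, I.right.2, by
      rw [← Category.assoc, ← hwI]
      exact (Category.comp_id _).symm.trans (congrArg _ ((eqToHom_refl _ _).symm.trans (eqToHom_trans _ _).symm))
        |>.trans (Category.assoc _ _ _).symm, ?_⟩
    intro a'' f h hf
    have hY : u.map f ≫ eqToHom (h.trans I.right.2) = eqToHom ha ≫ p := by
      rw [← hwI]
      exact (congrArg (u.map f ≫ ·) (eqToHom_trans _ _).symm).trans
        ((Category.assoc _ _ _).symm.trans (congrArg (· ≫ eqToHom _) hf))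
    let Y : StructuredArrow X (fiberToComma u b') :=
      StructuredArrow.mk (Y := mkFiber u a'' (h.trans I.right.2))
        (CostructuredArrow.homMk f (by exact hY))
    let m := initial.to Y
    refine ⟨m.right.1, ⟨m.right.2, ?_⟩, ?_⟩
    · have := congrArg CommaMorphism.left (StructuredArrow.w m)
      exact this.symm
    · intro g' ⟨hg1, hg2⟩
      let m' : I ⟶ Y := StructuredArrow.homMk
        (mkFiberHom (y := mkFiber u a'' (h.trans I.right.2)) g' hg1) (by
          apply CostructuredArrow.hom_ext
          show I.hom.left ≫ g' = f
          exact hg2.symm)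
      have hmm : m' = m := initial.hom_ext m' m
      have := congrArg (fun z : I ⟶ Y => (CommaMorphism.right z).1) hmm
      exact this

end Paper
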